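/- The doubly weighted Bollobás–Riordan polynomial of a ribbon graph G is a rescaled multivariable dichromatic polynomial: BR_G(X,Y,Z) = (Π_{e∈E(G)} y_e) (YZ)^{−v(G)} X^{−k(G)} · Z_G(XYZ², {x_e Y Z / y_e}, Z^{−1}), where v(G) = |V(G)| and k(G) is the number of connected components of G. -/

import Mathlib

/-!
An abstract combinatorial model of *arrow ribbon graphs* (Bradford, Butler,
Chmutov, "Arrow ribbon graphs").  A ribbon graph is a surface with boundary
decomposed into vertex-discs and edge-ribbons; an arrow ribbon graph carries in
addition a finite set of directed arrows on the boundary arcs of its discs.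
We record the combinatorial data of such a graph with edge set `E`:
* `kdual D F` is the number of connected components of the spanning subgraph
  with edge set `F` of the partial dual `G^D` (so `kdual ∅ F` is the number of
  connected components `k(F)` of the spanning subgraph `F` of `G` itself);
* `boundary F` is the multiset of boundary components of the spanning subgraph
  `F` of `G`, each boundary circle recorded as the cyclic word (a list, read
  along the circle) of the directions of the arrows lying on it.
Under partial duality the boundary of the spanning subgraph `F` of `G^D` is the
boundary of `F ∆ D` in `G`, with the same arrows, and the components count is
`kdual (D ∆ D') F` for the iterated dual; this makes partial duality, deletion
and (via `G/e := G^{e} − e`) contraction definable on this data.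
-/

open scoped symmDiff

/-- One letter of a boundary arrow word acts on `ℤ` as a reflection (the two
directions of arrows giving the two reflections `x ↦ -x` and `x ↦ 1 - x`
generating the infinite dihedral group).  `arrowStep (s, t) ℓ` composes the
affine map `x ↦ s·x + t` with the reflection of the letter `ℓ`. -/
def arrowStep (p : ℤ × ℤ) (ℓ : Bool) : ℤ × ℤ :=
  (-p.1, p.1 * (if ℓ then 0 else 1) + p.2)

/-- The number of arrows remaining on a boundary circle, encoded by the cyclic
word `w` of the directions of the arrows along it, after recursively cancelling
all neighbouring pairs of arrows pointing in the same direction: an odd word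
cyclically reduces to a single arrow, and an even word reduces to an
alternating word of length `2|t|`, where `t` is the translation part of the
product of the reflections of its letters.  The paper's index `i(f)` equals
half of this number; accordingly we index the formal variables `K` by the
doubled index, so `K n` stands for the paper's `K_{n/2}`, and `K 0 = 1`. -/
def reducedArrowCount (w : List Bool) : ℕ :=
  if w.length % 2 = 1 then 1 else 2 * (w.foldl arrowStep (1, 0)).2.natAbs

/-- Abstract combinatorial model of an arrow ribbon graph with edge set `E`. -/
structure ArrowRibbonGraph (E : Type) [DecidableEq E] : Type where
  /-- `kdual D F` = number of connected components of the spanning subgraph `F`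
  of the partial dual `G^D`. -/
  kdual : Finset E → Finset E → ℕ
  /-- `boundary F` = the boundary components of the spanning subgraph `F`,
  each recorded as the cyclic word of directions of the arrows on it. -/
  boundary : Finset E → Multiset (List Bool)

namespace ArrowRibbonGraph

variable {E : Type} [DecidableEq E]

/-- `k(F)`: the number of connected components of the spanning subgraph `F`. -/
def k (G : ArrowRibbonGraph E) (F : Finset E) : ℕ := G.kdual ∅ F

/-- `bc(F)`: the number of boundary components of the spanning subgraph `F`. -/
def bc (G : ArrowRibbonGraph E) (F : Finset E) : ℕ := (G.boundary F).card

/-- The monomial `∏_{f ∈ ∂F} K_{i(f)}` over the boundary components of the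
spanning subgraph `F` (with `K` indexed by the doubled index `2·i(f)`). -/
def arrowMonomial {R : Type} [CommRing R] (G : ArrowRibbonGraph E)
    (K : ℕ → R) (F : Finset E) : R :=
  ((G.boundary F).map fun w => K (reducedArrowCount w)).prod

/-- The partial dual `G^D` of `G` with respect to a subset `D` of edges. -/
def pdual (G : ArrowRibbonGraph E) (D : Finset E) : ArrowRibbonGraph E where
  kdual D' F := G.kdual (D ∆ D') F
  boundary F := G.boundary (F ∆ D)

/-- Deletion `G − e` of the edge `e`: the edge-ribbon `e` is removed, spanning
subgraphs of `G − e` being exactly the spanning subgraphs of `G` avoiding `e`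
(with the same components, boundary and arrows; the arrows of `e` lying on its
attaching arcs persist on the corresponding free vertex arcs). -/
def delete (G : ArrowRibbonGraph E) (e : E) : ArrowRibbonGraph {x // x ≠ e} where
  kdual D F := G.kdual (D.map (Function.Embedding.subtype _))
    (F.map (Function.Embedding.subtype _))
  boundary F := G.boundary (F.map (Function.Embedding.subtype _))

/-- Contraction, defined via partial duality: `G/e := G^{{e}} − e`. -/
def contract (G : ArrowRibbonGraph E) (e : E) : ArrowRibbonGraph {x // x ≠ e} :=
  (G.pdual {e}).delete e

/-- The arrow dichromatic polynomial
`A_G(a,b,c,K) = ∑_{F ⊆ E(G)} a^{k(F)} (∏_{e∈F} b_e) c^{bc(F)} ∏_{f∈∂F} K_{i(f)}`. -/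
def arrowDichromatic [Fintype E] (G : ArrowRibbonGraph E) {R : Type} [CommRing R]
    (a c : R) (b : E → R) (K : ℕ → R) : R :=
  ∑ F : Finset E, a ^ G.k F * (∏ e ∈ F, b e) * c ^ G.bc F * G.arrowMonomial K F

end ArrowRibbonGraph

open ArrowRibbonGraph

namespace ArrowRibbonGraph

variable {E : Type} [DecidableEq E]

/-- `v(G)`, the number of vertex-discs of `G`: each vertex-disc contributes one
boundary circle to the edgeless spanning subgraph, so `v(G) = bc(∅)`. -/
def verts (G : ArrowRibbonGraph E) : ℕ := G.bc ∅

/-- `k(G)`, the number of connected components of the ribbon graph `G`. -/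
def components [Fintype E] (G : ArrowRibbonGraph E) : ℕ := G.k Finset.univ

/-- The rank `r(F) := |V(G)| − k(F)` of a spanning subgraph. -/
def rk (G : ArrowRibbonGraph E) (F : Finset E) : ℤ := (G.verts : ℤ) - G.k F

/-- The nullity `n(F) := |F| − r(F)` of a spanning subgraph. -/
def nl (G : ArrowRibbonGraph E) (F : Finset E) : ℤ := (F.card : ℤ) - G.rk F

/-- The multivariable dichromatic polynomial of a ribbon graph
`Z_G(a,b,c) = ∑_{F ⊆ E(G)} a^{k(F)} (∏_{e∈F} b_e) c^{bc(F)}`. -/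
def dichromatic [Fintype E] (G : ArrowRibbonGraph E) {R : Type} [CommRing R]
    (a c : R) (b : E → R) : R :=
  ∑ F : Finset E, a ^ G.k F * (∏ e ∈ F, b e) * c ^ G.bc F

/-- The doubly weighted Bollobás–Riordan polynomial
`BR_G(X,Y,Z) = ∑_{F ⊆ E(G)} (∏_{e∈F} x_e)(∏_{e∉F} y_e)
X^{r(G)−r(F)} Y^{n(F)} Z^{k(F)−bc(F)+n(F)}`. -/
def BR [Fintype E] (G : ArrowRibbonGraph E) {R : Type} [Field R]
    (x y : E → R) (X Y Z : R) : R :=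
  ∑ F : Finset E,
    (∏ e ∈ F, x e) * (∏ e ∈ Fᶜ, y e) *
      X ^ (G.rk Finset.univ - G.rk F) * Y ^ G.nl F *
      Z ^ ((G.k F : ℤ) - (G.bc F : ℤ) + G.nl F)

end ArrowRibbonGraph

/-- The doubly weighted Bollobás–Riordan polynomial is a
rescaled multivariable dichromatic polynomial:
`BR_G(X,Y,Z) = (∏_{e∈E(G)} y_e) (YZ)^{−v(G)} X^{−k(G)} ·
Z_G(XYZ², {x_e Y Z / y_e}, Z^{−1})`. -/

private lemma BR_key {R : Type} [Field R] (Px Py' PyF X Y Z : R)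
    (hX : X ≠ 0) (hY : Y ≠ 0) (hZ : Z ≠ 0) (hPyF : PyF ≠ 0)
    (v kG kF bcF cF : ℕ) :
    Px * Py' * X ^ (((v : ℤ) - (kG : ℤ)) - ((v : ℤ) - (kF : ℤ))) *
        Y ^ ((cF : ℤ) - ((v : ℤ) - (kF : ℤ))) *
        Z ^ ((kF : ℤ) - (bcF : ℤ) + ((cF : ℤ) - ((v : ℤ) - (kF : ℤ))))
    = PyF * Py' * (Y * Z) ^ (-(v : ℤ)) * X ^ (-(kG : ℤ)) *
        ((X * Y * Z ^ 2) ^ kF * (Px * (Y * Z) ^ cF / PyF) * Z⁻¹ ^ bcF) := by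
  have e1 : ((v : ℤ) - (kG : ℤ)) - ((v : ℤ) - (kF : ℤ))
      = ((kF : ℕ) : ℤ) - ((kG : ℕ) : ℤ) := by ring
  have e2 : (cF : ℤ) - ((v : ℤ) - (kF : ℤ)) = ((cF + kF : ℕ) : ℤ) - ((v : ℕ) : ℤ) := by
    push_cast; ring
  have e3 : (kF : ℤ) - (bcF : ℤ) + ((cF : ℤ) - ((v : ℤ) - (kF : ℤ)))
      = ((2 * kF + cF : ℕ) : ℤ) - ((bcF + v : ℕ) : ℤ) := by push_cast; ring
  rw [e1, e3, e2, zpow_sub₀ hX, zpow_sub₀ hY, zpow_sub₀ hZ]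
  simp only [zpow_neg, zpow_natCast, inv_pow]
  have hYZ : (Y * Z) ^ v ≠ 0 := pow_ne_zero _ (mul_ne_zero hY hZ)
  field_simp
  ring

theorem BR_eq_dichromatic
    {E : Type} [DecidableEq E] [Fintype E] {R : Type} [Field R]
    (G : ArrowRibbonGraph E) (x y : E → R) (X Y Z : R)
    (hX : X ≠ 0) (hY : Y ≠ 0) (hZ : Z ≠ 0) (hy : ∀ e, y e ≠ 0) :
    G.BR x y X Y Z =
      (∏ e, y e) * (Y * Z) ^ (-(G.verts : ℤ)) * X ^ (-(G.components : ℤ)) *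
        G.dichromatic (X * Y * Z ^ 2) Z⁻¹ (fun e => x e * Y * Z / y e) := by
  rw [ArrowRibbonGraph.BR, ArrowRibbonGraph.dichromatic, Finset.mul_sum]
  refine Finset.sum_congr rfl fun F _ => ?_
  have hprod : (∏ e ∈ F, (x e * Y * Z / y e))
      = (∏ e ∈ F, x e) * (Y * Z) ^ F.card / ∏ e ∈ F, y e := by
    rw [Finset.prod_div_distrib, Finset.prod_mul_distrib, Finset.prod_mul_distrib,
      Finset.prod_const, Finset.prod_const, mul_pow]
    ring
  have hPy : (∏ e, y e) = (∏ e ∈ F, y e) * ∏ e ∈ Fᶜ, y e :=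
    (Finset.prod_mul_prod_compl F y).symm
  have hPyF : (∏ e ∈ F, y e) ≠ 0 := Finset.prod_ne_zero_iff.mpr fun e _ => hy e
  simp only [ArrowRibbonGraph.rk, ArrowRibbonGraph.nl, ArrowRibbonGraph.components, hprod, hPy]
  exact BR_key _ _ _ _ _ _ hX hY hZ hPyF _ _ _ _ _
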